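/- Let Γ be an edge-regular graph with parameters (16,6,2). If some vertex x of Γ has local graph isomorphic to the disjoint union of two triangles, then Γ is isomorphic to the 4×4 rook graph. -/

import Mathlib

open scoped Classical

/-- The 4×4 rook graph. -/
def rook4 : SimpleGraph (Fin 4 × Fin 4) where
  Adj x y := x ≠ y ∧ (x.1 = y.1 ∨ x.2 = y.2)
  symm := by
    constructor
    rintro x y ⟨hne, h⟩
    exact ⟨hne.symm, by tauto⟩
  loopless := by constructor; rintro x ⟨hne, -⟩; exact hne rfl

/-- The disjoint union of two triangles on {0,1,2} and {3,4,5}. -/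
def twoTriangles : SimpleGraph (Fin 6) :=
  SimpleGraph.fromRel (fun a b => ((a : ℕ) < 3 ↔ (b : ℕ) < 3))

namespace RookAux
open Finset SimpleGraph

variable {V : Type*} [Fintype V] [DecidableEq V]

/-- `{x} ∪ range v`, the 7-element set consisting of `x` and its neighbours. -/
def S (x : V) (v : Fin 6 → V) : Finset V := insert x (Finset.univ.image v)

/-- outside neighbours of `v i`. -/
def P (G : SimpleGraph V) [DecidableRel G.Adj] (x : V) (v : Fin 6 → V) (i : Fin 6) : Finset V :=
  G.neighborFinset (v i) \ S x v

section

variable {G : SimpleGraph V} [DecidableRel G.Adj] {x : V} {v : Fin 6 → V}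

lemma mem_P {G : SimpleGraph V} [DecidableRel G.Adj] {x : V} {v : Fin 6 → V} {i : Fin 6} {z : V} :
    z ∈ P G x v i ↔ G.Adj (v i) z ∧ z ≠ x ∧ ∀ m, z ≠ v m := by
  simp only [P, S, mem_sdiff, mem_neighborFinset, mem_insert, mem_image, mem_univ, true_and]
  constructor
  · rintro ⟨h1, h2⟩
    push_neg at h2
    exact ⟨h1, h2.1, fun m hm => h2.2 m hm.symm⟩
  · rintro ⟨h1, h2, h3⟩
    refine ⟨h1, ?_⟩
    push_neg
    exact ⟨h2, fun m hm => (h3 m hm.symm).elim⟩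

lemma L1 (hreg : G.IsRegularOfDegree 6) (hvadj : ∀ i, G.Adj x (v i))
    (hvinj : Function.Injective v) :
    G.neighborFinset x = Finset.univ.image v := by
  refine (Finset.eq_of_subset_of_card_le ?_ ?_).symm
  · intro z hz
    simp only [mem_image, mem_univ, true_and] at hz
    obtain ⟨i, rfl⟩ := hz
    exact (mem_neighborFinset _ _ _).2 (hvadj i)
  · rw [Finset.card_image_of_injective _ hvinj]
    simp [card_neighborFinset_eq_degree, hreg x]

lemma L2' : ∀ i m : Fin 6, i ≠ m → ((i:ℕ) < 3 ↔ (m:ℕ) < 3) →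
    ∃ k, k ≠ i ∧ k ≠ m ∧ ((k:ℕ) < 3 ↔ (i:ℕ) < 3) ∧ ((k:ℕ) < 3 ↔ (m:ℕ) < 3) := by
  decide

lemma L2 (hl : ∀ u w : V, G.Adj u w → (G.neighborFinset u ∩ G.neighborFinset w).card = 2)
    (hvadj : ∀ i, G.Adj x (v i))
    (hvv : ∀ i j, G.Adj (v i) (v j) ↔ (i ≠ j ∧ ((i:ℕ) < 3 ↔ (j:ℕ) < 3)))
    {i j k : Fin 6} (hij : i ≠ j) (hki : k ≠ i) (hkj : k ≠ j)
    (hb1 : (i:ℕ) < 3 ↔ (j:ℕ) < 3) (hb2 : (k:ℕ) < 3 ↔ (i:ℕ) < 3) :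
    G.neighborFinset (v i) ∩ G.neighborFinset (v j) = {x, v k} := by
  refine (Finset.eq_of_subset_of_card_le ?_ ?_).symm
  · intro z hz
    simp only [mem_insert, mem_singleton] at hz
    rcases hz with rfl | rfl
    · simp [mem_inter, mem_neighborFinset, (hvadj i).symm, (hvadj j).symm]
    · simp only [mem_inter, mem_neighborFinset]
      exact ⟨(hvv i k).2 ⟨hki.symm, hb2.symm⟩, (hvv j k).2 ⟨hkj.symm, (hb1.symm.trans hb2.symm)⟩⟩
  · rw [hl _ _ ((hvv i j).2 ⟨hij, hb1⟩)]
    have hxk : x ≠ v k := G.ne_of_adj (hvadj k)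
    rw [Finset.card_insert_of_notMem (by simpa using hxk), Finset.card_singleton]

lemma L3 (hvadj : ∀ i, G.Adj x (v i))
    (hvv : ∀ i j, G.Adj (v i) (v j) ↔ (i ≠ j ∧ ((i:ℕ) < 3 ↔ (j:ℕ) < 3))) (i : Fin 6) :
    G.neighborFinset (v i) ∩ S x v =
      insert x ((Finset.univ.filter (fun j : Fin 6 => j ≠ i ∧ ((j:ℕ) < 3 ↔ (i:ℕ) < 3))).image v) := by
  ext z
  simp only [S, mem_inter, mem_neighborFinset, mem_insert, mem_image, mem_univ, true_and,
    mem_filter]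
  constructor
  · rintro ⟨h1, rfl | ⟨m, rfl⟩⟩
    · exact Or.inl rfl
    · refine Or.inr ⟨m, ?_, rfl⟩
      have := (hvv i m).1 h1
      exact ⟨fun h => this.1 h.symm, this.2.symm⟩
  · rintro (rfl | ⟨m, ⟨hm1, hm2⟩, rfl⟩)
    · exact ⟨(hvadj i).symm, Or.inl rfl⟩
    · exact ⟨(hvv i m).2 ⟨fun h => hm1 h.symm, hm2.symm⟩, Or.inr ⟨m, rfl⟩⟩

lemma card_P (hreg : G.IsRegularOfDegree 6) (hvadj : ∀ i, G.Adj x (v i))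
    (hvinj : Function.Injective v)
    (hvv : ∀ i j, G.Adj (v i) (v j) ↔ (i ≠ j ∧ ((i:ℕ) < 3 ↔ (j:ℕ) < 3))) (i : Fin 6) :
    (P G x v i).card = 3 := by
  have h1 : (G.neighborFinset (v i) \ S x v).card + (G.neighborFinset (v i) ∩ S x v).card
      = (G.neighborFinset (v i)).card := Finset.card_sdiff_add_card_inter _ _
  rw [L3 hvadj hvv i] at h1
  have hx : x ∉ (Finset.univ.filter (fun j : Fin 6 => j ≠ i ∧ ((j:ℕ) < 3 ↔ (i:ℕ) < 3))).image v := by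
    simp only [mem_image, mem_filter, mem_univ, true_and, not_exists]
    rintro m ⟨-, h⟩
    exact G.ne_of_adj (hvadj m) h.symm
  rw [Finset.card_insert_of_notMem hx, Finset.card_image_of_injective _ hvinj] at h1
  have h2 : ∀ i : Fin 6,
      (Finset.univ.filter (fun j : Fin 6 => j ≠ i ∧ ((j:ℕ) < 3 ↔ (i:ℕ) < 3))).card = 2 := by
    decide
  rw [h2 i] at h1
  have h3 : (G.neighborFinset (v i)).card = 6 := by
    simp [card_neighborFinset_eq_degree, hreg (v i)]
  rw [h3] at h1
  simpa [P] using by omega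

lemma L6 (hl : ∀ u w : V, G.Adj u w → (G.neighborFinset u ∩ G.neighborFinset w).card = 2)
    (hvadj : ∀ i, G.Adj x (v i))
    (hvv : ∀ i j, G.Adj (v i) (v j) ↔ (i ≠ j ∧ ((i:ℕ) < 3 ↔ (j:ℕ) < 3)))
    {i j : Fin 6} (hij : i ≠ j) (hb : (i:ℕ) < 3 ↔ (j:ℕ) < 3)
    {z : V} (h1 : z ∈ P G x v i) (h2 : z ∈ P G x v j) : False := by
  obtain ⟨k, hki, hkj, hb2, -⟩ := L2' i j hij hb
  have hz : z ∈ G.neighborFinset (v i) ∩ G.neighborFinset (v j) := by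
    simp only [mem_inter, mem_neighborFinset]
    exact ⟨(mem_P.1 h1).1, (mem_P.1 h2).1⟩
  rw [L2 hl hvadj hvv hij hki hkj hb hb2] at hz
  simp only [mem_insert, mem_singleton] at hz
  rcases hz with rfl | rfl
  · exact (mem_P.1 h1).2.1 rfl
  · exact (mem_P.1 h1).2.2 k rfl

lemma card_S (hvadj : ∀ i, G.Adj x (v i)) (hvinj : Function.Injective v) :
    (S x v).card = 7 := by
  have hx : x ∉ Finset.univ.image v := by
    simp only [mem_image, mem_univ, true_and, not_exists]
    exact fun m h => G.ne_of_adj (hvadj m) h.symm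
  rw [S, Finset.card_insert_of_notMem hx, Finset.card_image_of_injective _ hvinj]
  simp

lemma card_M (hcard : Fintype.card V = 16) (hvadj : ∀ i, G.Adj x (v i))
    (hvinj : Function.Injective v) :
    (Finset.univ \ S x v).card = 9 := by
  rw [Finset.card_sdiff_of_subset (Finset.subset_univ _), card_S hvadj hvinj]
  simp [hcard]

lemma LA (hcard : Fintype.card V = 16) (hreg : G.IsRegularOfDegree 6)
    (hl : ∀ u w : V, G.Adj u w → (G.neighborFinset u ∩ G.neighborFinset w).card = 2)
    (hvadj : ∀ i, G.Adj x (v i)) (hvinj : Function.Injective v)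
    (hvv : ∀ i j, G.Adj (v i) (v j) ↔ (i ≠ j ∧ ((i:ℕ) < 3 ↔ (j:ℕ) < 3)))
    {y : V} (hy : y ∉ S x v) :
    y ∈ P G x v 0 ∨ y ∈ P G x v 1 ∨ y ∈ P G x v 2 := by
  have hd01 : Disjoint (P G x v 0) (P G x v 1) := Finset.disjoint_left.2
    (fun z h1 h2 => L6 hl hvadj hvv (by decide) (by decide) h1 h2)
  have hd02 : Disjoint (P G x v 0) (P G x v 2) := Finset.disjoint_left.2
    (fun z h1 h2 => L6 hl hvadj hvv (by decide) (by decide) h1 h2)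
  have hd12 : Disjoint (P G x v 1) (P G x v 2) := Finset.disjoint_left.2
    (fun z h1 h2 => L6 hl hvadj hvv (by decide) (by decide) h1 h2)
  have hcardT : (P G x v 0 ∪ (P G x v 1 ∪ P G x v 2)).card = 9 := by
    rw [Finset.card_union_of_disjoint (by
      rw [Finset.disjoint_union_right]; exact ⟨hd01, hd02⟩),
      Finset.card_union_of_disjoint hd12,
      card_P hreg hvadj hvinj hvv, card_P hreg hvadj hvinj hvv,
      card_P hreg hvadj hvinj hvv]
  have hsub : P G x v 0 ∪ (P G x v 1 ∪ P G x v 2) ⊆ Finset.univ \ S x v := by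
    intro z hz
    simp only [mem_union] at hz
    rw [mem_sdiff]
    rcases hz with h | h | h <;>
      exact ⟨Finset.mem_univ _, (Finset.mem_sdiff.1 h).2⟩
  have heq : P G x v 0 ∪ (P G x v 1 ∪ P G x v 2) = Finset.univ \ S x v :=
    Finset.eq_of_subset_of_card_le hsub
      (by rw [hcardT, card_M hcard hvadj hvinj])
  have : y ∈ P G x v 0 ∪ (P G x v 1 ∪ P G x v 2) := by
    rw [heq, mem_sdiff]; exact ⟨Finset.mem_univ _, hy⟩
  simpa [mem_union] using this

lemma LB (hcard : Fintype.card V = 16) (hreg : G.IsRegularOfDegree 6)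
    (hl : ∀ u w : V, G.Adj u w → (G.neighborFinset u ∩ G.neighborFinset w).card = 2)
    (hvadj : ∀ i, G.Adj x (v i)) (hvinj : Function.Injective v)
    (hvv : ∀ i j, G.Adj (v i) (v j) ↔ (i ≠ j ∧ ((i:ℕ) < 3 ↔ (j:ℕ) < 3)))
    {y : V} (hy : y ∉ S x v) :
    y ∈ P G x v 3 ∨ y ∈ P G x v 4 ∨ y ∈ P G x v 5 := by
  have hd01 : Disjoint (P G x v 3) (P G x v 4) := Finset.disjoint_left.2
    (fun z h1 h2 => L6 hl hvadj hvv (by decide) (by decide) h1 h2)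
  have hd02 : Disjoint (P G x v 3) (P G x v 5) := Finset.disjoint_left.2
    (fun z h1 h2 => L6 hl hvadj hvv (by decide) (by decide) h1 h2)
  have hd12 : Disjoint (P G x v 4) (P G x v 5) := Finset.disjoint_left.2
    (fun z h1 h2 => L6 hl hvadj hvv (by decide) (by decide) h1 h2)
  have hcardT : (P G x v 3 ∪ (P G x v 4 ∪ P G x v 5)).card = 9 := by
    rw [Finset.card_union_of_disjoint (by
      rw [Finset.disjoint_union_right]; exact ⟨hd01, hd02⟩),
      Finset.card_union_of_disjoint hd12,
      card_P hreg hvadj hvinj hvv, card_P hreg hvadj hvinj hvv,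
      card_P hreg hvadj hvinj hvv]
  have hsub : P G x v 3 ∪ (P G x v 4 ∪ P G x v 5) ⊆ Finset.univ \ S x v := by
    intro z hz
    simp only [mem_union] at hz
    rw [mem_sdiff]
    rcases hz with h | h | h <;>
      exact ⟨Finset.mem_univ _, (Finset.mem_sdiff.1 h).2⟩
  have heq : P G x v 3 ∪ (P G x v 4 ∪ P G x v 5) = Finset.univ \ S x v :=
    Finset.eq_of_subset_of_card_le hsub
      (by rw [hcardT, card_M hcard hvadj hvinj])
  have : y ∈ P G x v 3 ∪ (P G x v 4 ∪ P G x v 5) := by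
    rw [heq, mem_sdiff]; exact ⟨Finset.mem_univ _, hy⟩
  simpa [mem_union] using this

/-- the row/column cliques: common neighbours of `v i` and `y ∈ P i`. -/
lemma L8 (hreg : G.IsRegularOfDegree 6)
    (hl : ∀ u w : V, G.Adj u w → (G.neighborFinset u ∩ G.neighborFinset w).card = 2)
    (hvadj : ∀ i, G.Adj x (v i)) (hvinj : Function.Injective v)
    (hvv : ∀ i j, G.Adj (v i) (v j) ↔ (i ≠ j ∧ ((i:ℕ) < 3 ↔ (j:ℕ) < 3)))
    {i : Fin 6} {y : V} (hy : y ∈ P G x v i) :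
    G.neighborFinset (v i) ∩ G.neighborFinset y = P G x v i \ {y} := by
  obtain ⟨hadj, hyx, hyv⟩ := mem_P.1 hy
  refine Finset.eq_of_subset_of_card_le ?_ ?_ |>.symm |>.symm
  · intro z hz
    simp only [mem_inter, mem_neighborFinset] at hz
    obtain ⟨hz1, hz2⟩ := hz
    by_cases hzS : z ∈ S x v
    · exfalso
      simp only [S, mem_insert, mem_image, mem_univ, true_and] at hzS
      rcases hzS with hzx | ⟨m, hm⟩
      · -- z = x : y adjacent to x, so y ∈ image v
        have : y ∈ G.neighborFinset x := (mem_neighborFinset _ _ _).2 (hzx ▸ hz2).symm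
        rw [L1 hreg hvadj hvinj] at this
        simp only [mem_image, mem_univ, true_and] at this
        obtain ⟨m, hm⟩ := this
        exact hyv m hm.symm
      · -- z = v m, m ≠ i same block; then y ∈ N(v i) ∩ N(v m) = {x, v k}
        rw [← hm] at hz1 hz2
        have hmi : m ≠ i ∧ ((i:ℕ) < 3 ↔ (m:ℕ) < 3) := by
          have := (hvv i m).1 hz1
          exact ⟨fun h => this.1 h.symm, this.2⟩
        obtain ⟨k, hki, hkm, hb2, -⟩ := L2' i m (fun h => hmi.1 h.symm) hmi.2
        have hmem : y ∈ G.neighborFinset (v i) ∩ G.neighborFinset (v m) := by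
          simp only [mem_inter, mem_neighborFinset]
          exact ⟨hadj, hz2.symm⟩
        rw [L2 hl hvadj hvv (fun h => hmi.1 h.symm) hki hkm hmi.2 hb2] at hmem
        simp only [mem_insert, mem_singleton] at hmem
        rcases hmem with rfl | rfl
        · exact hyx rfl
        · exact hyv k rfl
    · have : z ∈ P G x v i := Finset.mem_sdiff.2 ⟨(mem_neighborFinset _ _ _).2 hz1, hzS⟩
      refine Finset.mem_sdiff.2 ⟨this, ?_⟩
      simp only [mem_singleton]
      exact fun h => G.ne_of_adj hz2 (h.symm ▸ rfl)
  · have h1 : (P G x v i \ {y}).card = 2 := by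
      rw [Finset.card_sdiff_of_subset (by simpa using hy), card_P hreg hvadj hvinj hvv]
      simp
    rw [h1, hl _ _ hadj]

lemma L8' (hreg : G.IsRegularOfDegree 6)
    (hl : ∀ u w : V, G.Adj u w → (G.neighborFinset u ∩ G.neighborFinset w).card = 2)
    (hvadj : ∀ i, G.Adj x (v i)) (hvinj : Function.Injective v)
    (hvv : ∀ i j, G.Adj (v i) (v j) ↔ (i ≠ j ∧ ((i:ℕ) < 3 ↔ (j:ℕ) < 3)))
    {i : Fin 6} {y z : V} (hy : y ∈ P G x v i) (hz : z ∈ P G x v i) (hne : y ≠ z) :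
    G.Adj y z := by
  have : z ∈ G.neighborFinset (v i) ∩ G.neighborFinset y := by
    rw [L8 hreg hl hvadj hvinj hvv hy]
    exact Finset.mem_sdiff.2 ⟨hz, by simpa using fun h => hne h.symm⟩
  simp only [mem_inter, mem_neighborFinset] at this
  exact this.2

/-- each "cell" contains at most one vertex. -/
lemma L9 (hreg : G.IsRegularOfDegree 6)
    (hl : ∀ u w : V, G.Adj u w → (G.neighborFinset u ∩ G.neighborFinset w).card = 2)
    (hvadj : ∀ i, G.Adj x (v i)) (hvinj : Function.Injective v)
    (hvv : ∀ i j, G.Adj (v i) (v j) ↔ (i ≠ j ∧ ((i:ℕ) < 3 ↔ (j:ℕ) < 3)))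
    {i j : Fin 6} (hij : i ≠ j) {y z : V}
    (hyi : y ∈ P G x v i) (hyj : y ∈ P G x v j)
    (hzi : z ∈ P G x v i) (hzj : z ∈ P G x v j) : y = z := by
  by_contra hne
  have hadj : G.Adj y z := L8' hreg hl hvadj hvinj hvv hyi hzi hne
  -- find a third element of P i
  have hcard : (P G x v i \ {y, z}).Nonempty := by
    rw [← Finset.card_pos]
    have h1 : (P G x v i).card - ({y, z} : Finset V).card ≤ (P G x v i \ {y, z}).card :=
      Finset.le_card_sdiff _ _
    have h2 : ({y, z} : Finset V).card ≤ 2 := Finset.card_insert_le _ _ |>.trans (by simp)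
    rw [card_P hreg hvadj hvinj hvv] at h1
    omega
  obtain ⟨w, hw⟩ := hcard
  rw [Finset.mem_sdiff, Finset.mem_insert, Finset.mem_singleton] at hw
  push_neg at hw
  obtain ⟨hwP, hwy, hwz⟩ := hw
  have hC : ({v i, v j, w} : Finset V) ⊆ G.neighborFinset y ∩ G.neighborFinset z := by
    intro u hu
    simp only [mem_insert, mem_singleton] at hu
    simp only [mem_inter, mem_neighborFinset]
    rcases hu with rfl | rfl | rfl
    · exact ⟨(mem_P.1 hyi).1.symm, (mem_P.1 hzi).1.symm⟩
    · exact ⟨(mem_P.1 hyj).1.symm, (mem_P.1 hzj).1.symm⟩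
    · exact ⟨L8' hreg hl hvadj hvinj hvv hyi hwP (fun h => hwy h.symm),
        L8' hreg hl hvadj hvinj hvv hzi hwP (fun h => hwz h.symm)⟩
  have hCcard : ({v i, v j, w} : Finset V).card = 3 := by
    rw [Finset.card_insert_of_notMem, Finset.card_insert_of_notMem, Finset.card_singleton]
    · simp only [mem_singleton]
      exact fun h => (mem_P.1 hwP).2.2 j h.symm
    · simp only [mem_insert, mem_singleton]
      push_neg
      exact ⟨fun h => hij (hvinj h), fun h => (mem_P.1 hwP).2.2 i h.symm⟩
  have := Finset.card_le_card hC
  rw [hCcard, hl _ _ hadj] at this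
  omega

/-- the full neighbourhood of an outside vertex. -/
lemma L10 (hreg : G.IsRegularOfDegree 6)
    (hl : ∀ u w : V, G.Adj u w → (G.neighborFinset u ∩ G.neighborFinset w).card = 2)
    (hvadj : ∀ i, G.Adj x (v i)) (hvinj : Function.Injective v)
    (hvv : ∀ i j, G.Adj (v i) (v j) ↔ (i ≠ j ∧ ((i:ℕ) < 3 ↔ (j:ℕ) < 3)))
    {i j : Fin 6} (hij : i ≠ j) {y : V}
    (hyi : y ∈ P G x v i) (hyj : y ∈ P G x v j) :
    G.neighborFinset y =
      insert (v i) (insert (v j) ((P G x v i \ {y}) ∪ (P G x v j \ {y}))) := by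
  refine (Finset.eq_of_subset_of_card_le ?_ ?_).symm
  · intro z hz
    simp only [mem_insert, mem_union] at hz
    rw [mem_neighborFinset]
    rcases hz with rfl | rfl | hz | hz
    · exact (mem_P.1 hyi).1.symm
    · exact (mem_P.1 hyj).1.symm
    · rw [Finset.mem_sdiff, Finset.mem_singleton] at hz
      exact L8' hreg hl hvadj hvinj hvv hyi hz.1 (fun h => hz.2 h.symm) |>.symm |>.symm
    · rw [Finset.mem_sdiff, Finset.mem_singleton] at hz
      exact L8' hreg hl hvadj hvinj hvv hyj hz.1 (fun h => hz.2 h.symm) |>.symm |>.symm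
  · have hdisj : Disjoint (P G x v i \ {y}) (P G x v j \ {y}) := by
      rw [Finset.disjoint_left]
      intro z hz1 hz2
      rw [Finset.mem_sdiff, Finset.mem_singleton] at hz1 hz2
      exact hz1.2 (L9 hreg hl hvadj hvinj hvv hij hz1.1 hz2.1 hyi hyj)
    have hc1 : (P G x v i \ {y}).card = 2 := by
      rw [Finset.card_sdiff_of_subset (by simpa using hyi), card_P hreg hvadj hvinj hvv]
      simp
    have hc2 : (P G x v j \ {y}).card = 2 := by
      rw [Finset.card_sdiff_of_subset (by simpa using hyj), card_P hreg hvadj hvinj hvv]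
      simp
    have hvjnot : v j ∉ (P G x v i \ {y}) ∪ (P G x v j \ {y}) := by
      simp only [mem_union, Finset.mem_sdiff]
      rintro (⟨h, -⟩ | ⟨h, -⟩) <;> exact (mem_P.1 h).2.2 j rfl
    have hvinot : v i ∉ insert (v j) ((P G x v i \ {y}) ∪ (P G x v j \ {y})) := by
      simp only [mem_insert, mem_union, Finset.mem_sdiff]
      rintro (h | ⟨h, -⟩ | ⟨h, -⟩)
      · exact hij (hvinj h)
      · exact (mem_P.1 h).2.2 i rfl
      · exact (mem_P.1 h).2.2 i rfl
    rw [Finset.card_insert_of_notMem hvinot, Finset.card_insert_of_notMem hvjnot,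
      Finset.card_union_of_disjoint hdisj, hc1, hc2]
    have : (G.neighborFinset y).card = 6 := by
      simp [card_neighborFinset_eq_degree, hreg y]
    omega

/-- outside vertices in different rows and different columns are not adjacent. -/
lemma L11 (hreg : G.IsRegularOfDegree 6)
    (hl : ∀ u w : V, G.Adj u w → (G.neighborFinset u ∩ G.neighborFinset w).card = 2)
    (hvadj : ∀ i, G.Adj x (v i)) (hvinj : Function.Injective v)
    (hvv : ∀ i j, G.Adj (v i) (v j) ↔ (i ≠ j ∧ ((i:ℕ) < 3 ↔ (j:ℕ) < 3)))
    {i j i' j' : Fin 6}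
    (hiA : (i:ℕ) < 3) (hi'A : (i':ℕ) < 3) (hjB : ¬ (j:ℕ) < 3) (hj'B : ¬ (j':ℕ) < 3)
    (hii' : i ≠ i') (hjj' : j ≠ j') {y z : V}
    (hyi : y ∈ P G x v i) (hyj : y ∈ P G x v j)
    (hzi : z ∈ P G x v i') (hzj : z ∈ P G x v j') :
    ¬ G.Adj y z := by
  intro hadj
  have hij : i ≠ j := fun h => hjB (h ▸ hiA)
  have hz : z ∈ G.neighborFinset y := (mem_neighborFinset _ _ _).2 hadj
  rw [L10 hreg hl hvadj hvinj hvv hij hyi hyj] at hz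
  simp only [mem_insert, mem_union, Finset.mem_sdiff, Finset.mem_singleton] at hz
  rcases hz with rfl | rfl | ⟨h, -⟩ | ⟨h, -⟩
  · exact (mem_P.1 hzi).2.2 i rfl
  · exact (mem_P.1 hzi).2.2 j rfl
  · exact L6 hl hvadj hvv hii' (iff_of_true hiA hi'A) h hzi
  · exact L6 hl hvadj hvv hjj' (iff_of_false hjB hj'B) h hzj

/-- the label of `v i` in the rook graph. -/
def vlab : Fin 6 → Fin 4 × Fin 4
  | 0 => (0,1) | 1 => (0,2) | 2 => (0,3) | 3 => (1,0) | 4 => (2,0) | 5 => (3,0)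

def rval : Fin 6 → Fin 4
  | 0 => 0 | 1 => 0 | 2 => 0 | 3 => 1 | 4 => 2 | 5 => 3

def cval : Fin 6 → Fin 4
  | 0 => 1 | 1 => 2 | 2 => 3 | 3 => 0 | 4 => 0 | 5 => 0

/-- the labelling function. -/
def lab (G : SimpleGraph V) [DecidableRel G.Adj] (x : V) (v : Fin 6 → V) (u : V) :
    Fin 4 × Fin 4 :=
  if u = x then (0,0)
  else if u = v 0 then (0,1) else if u = v 1 then (0,2) else if u = v 2 then (0,3)
  else if u = v 3 then (1,0) else if u = v 4 then (2,0) else if u = v 5 then (3,0)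
  else ((if u ∈ P G x v 3 then 1 else if u ∈ P G x v 4 then 2 else 3),
        (if u ∈ P G x v 0 then 1 else if u ∈ P G x v 1 then 2 else 3))

lemma lab_x : lab G x v x = (0,0) := by simp [lab]

lemma lab_v (hvadj : ∀ i, G.Adj x (v i)) (hvinj : Function.Injective v) (i : Fin 6) :
    lab G x v (v i) = vlab i := by
  have hx : ∀ m : Fin 6, v m ≠ x := fun m h => G.ne_of_adj (hvadj m) h.symm
  have h10 : v 1 ≠ v 0 := hvinj.ne (by decide)
  have h20 : v 2 ≠ v 0 := hvinj.ne (by decide)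
  have h21 : v 2 ≠ v 1 := hvinj.ne (by decide)
  have h30 : v 3 ≠ v 0 := hvinj.ne (by decide)
  have h31 : v 3 ≠ v 1 := hvinj.ne (by decide)
  have h32 : v 3 ≠ v 2 := hvinj.ne (by decide)
  have h40 : v 4 ≠ v 0 := hvinj.ne (by decide)
  have h41 : v 4 ≠ v 1 := hvinj.ne (by decide)
  have h42 : v 4 ≠ v 2 := hvinj.ne (by decide)
  have h43 : v 4 ≠ v 3 := hvinj.ne (by decide)
  have h50 : v 5 ≠ v 0 := hvinj.ne (by decide)
  have h51 : v 5 ≠ v 1 := hvinj.ne (by decide)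
  have h52 : v 5 ≠ v 2 := hvinj.ne (by decide)
  have h53 : v 5 ≠ v 3 := hvinj.ne (by decide)
  have h54 : v 5 ≠ v 4 := hvinj.ne (by decide)
  fin_cases i <;>
    simp [lab, vlab, hx 0, hx 1, hx 2, hx 3, hx 4, hx 5,
      h10, h20, h21, h30, h31, h32, h40, h41, h42, h43, h50, h51, h52, h53, h54] <;>
    try decide

lemma lab_col (hl : ∀ u w : V, G.Adj u w → (G.neighborFinset u ∩ G.neighborFinset w).card = 2)
    (hvadj : ∀ i, G.Adj x (v i))
    (hvv : ∀ i j, G.Adj (v i) (v j) ↔ (i ≠ j ∧ ((i:ℕ) < 3 ↔ (j:ℕ) < 3)))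
    {i : Fin 6} (hi : (i:ℕ) < 3) {y : V} (hy : y ∈ P G x v i) :
    (lab G x v y).2 = cval i := by
  obtain ⟨-, hyx, hyv⟩ := mem_P.1 hy
  fin_cases i
  · have hy0 : y ∈ P G x v 0 := hy
    simp [lab, cval, hyx, hyv 0, hyv 1, hyv 2, hyv 3, hyv 4, hyv 5, hy0]
  · have hy1 : y ∈ P G x v 1 := hy
    have h0 : y ∉ P G x v 0 := fun h =>
      L6 hl hvadj hvv (show (0:Fin 6) ≠ 1 by decide) (by decide) h hy1
    simp [lab, cval, hyx, hyv 0, hyv 1, hyv 2, hyv 3, hyv 4, hyv 5, h0, hy1]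
  · have hy2 : y ∈ P G x v 2 := hy
    have h0 : y ∉ P G x v 0 := fun h =>
      L6 hl hvadj hvv (show (0:Fin 6) ≠ 2 by decide) (by decide) h hy2
    have h1 : y ∉ P G x v 1 := fun h =>
      L6 hl hvadj hvv (show (1:Fin 6) ≠ 2 by decide) (by decide) h hy2
    simp [lab, cval, hyx, hyv 0, hyv 1, hyv 2, hyv 3, hyv 4, hyv 5, h0, h1]
  · simp at hi
  · simp at hi
  · simp at hi

lemma lab_row (hl : ∀ u w : V, G.Adj u w → (G.neighborFinset u ∩ G.neighborFinset w).card = 2)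
    (hvadj : ∀ i, G.Adj x (v i))
    (hvv : ∀ i j, G.Adj (v i) (v j) ↔ (i ≠ j ∧ ((i:ℕ) < 3 ↔ (j:ℕ) < 3)))
    {j : Fin 6} (hj : ¬ (j:ℕ) < 3) {y : V} (hy : y ∈ P G x v j) :
    (lab G x v y).1 = rval j := by
  obtain ⟨-, hyx, hyv⟩ := mem_P.1 hy
  fin_cases j
  · simp at hj
  · simp at hj
  · simp at hj
  · have hy3 : y ∈ P G x v 3 := hy
    simp [lab, rval, hyx, hyv 0, hyv 1, hyv 2, hyv 3, hyv 4, hyv 5, hy3]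
  · have hy4 : y ∈ P G x v 4 := hy
    have h0 : y ∉ P G x v 3 := fun h =>
      L6 hl hvadj hvv (show (3:Fin 6) ≠ 4 by decide) (by decide) h hy4
    simp [lab, rval, hyx, hyv 0, hyv 1, hyv 2, hyv 3, hyv 4, hyv 5, h0, hy4]
  · have hy5 : y ∈ P G x v 5 := hy
    have h0 : y ∉ P G x v 3 := fun h =>
      L6 hl hvadj hvv (show (3:Fin 6) ≠ 5 by decide) (by decide) h hy5
    have h1 : y ∉ P G x v 4 := fun h =>
      L6 hl hvadj hvv (show (4:Fin 6) ≠ 5 by decide) (by decide) h hy5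
    simp [lab, rval, hyx, hyv 0, hyv 1, hyv 2, hyv 3, hyv 4, hyv 5, h0, h1]

lemma LA' (hcard : Fintype.card V = 16) (hreg : G.IsRegularOfDegree 6)
    (hl : ∀ u w : V, G.Adj u w → (G.neighborFinset u ∩ G.neighborFinset w).card = 2)
    (hvadj : ∀ i, G.Adj x (v i)) (hvinj : Function.Injective v)
    (hvv : ∀ i j, G.Adj (v i) (v j) ↔ (i ≠ j ∧ ((i:ℕ) < 3 ↔ (j:ℕ) < 3)))
    {y : V} (hy : y ∉ S x v) : ∃ i : Fin 6, (i:ℕ) < 3 ∧ y ∈ P G x v i := by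
  rcases LA hcard hreg hl hvadj hvinj hvv hy with h | h | h
  · exact ⟨0, by decide, h⟩
  · exact ⟨1, by decide, h⟩
  · exact ⟨2, by decide, h⟩

lemma LB' (hcard : Fintype.card V = 16) (hreg : G.IsRegularOfDegree 6)
    (hl : ∀ u w : V, G.Adj u w → (G.neighborFinset u ∩ G.neighborFinset w).card = 2)
    (hvadj : ∀ i, G.Adj x (v i)) (hvinj : Function.Injective v)
    (hvv : ∀ i j, G.Adj (v i) (v j) ↔ (i ≠ j ∧ ((i:ℕ) < 3 ↔ (j:ℕ) < 3)))
    {y : V} (hy : y ∉ S x v) : ∃ j : Fin 6, ¬ (j:ℕ) < 3 ∧ y ∈ P G x v j := by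
  rcases LB hcard hreg hl hvadj hvinj hvv hy with h | h | h
  · exact ⟨3, by decide, h⟩
  · exact ⟨4, by decide, h⟩
  · exact ⟨5, by decide, h⟩

lemma tri (x : V) (v : Fin 6 → V) (y : V) :
    x = y ∨ (∃ i, v i = y) ∨ y ∉ S x v := by
  by_cases h1 : x = y
  · exact Or.inl h1
  by_cases h2 : ∃ i, v i = y
  · exact Or.inr (Or.inl h2)
  refine Or.inr (Or.inr ?_)
  simp only [S, mem_insert, mem_image, mem_univ, true_and]
  push_neg
  exact ⟨fun h => h1 h.symm, fun m h => h2 ⟨m, h⟩⟩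

-- decidable facts about the label tables
lemma d_vlab_ne00 : ∀ i : Fin 6, vlab i ≠ (0,0) := by decide
lemma d_vlab_inj : ∀ i m : Fin 6, vlab i = vlab m → i = m := by decide
lemma d_vlab_zero : ∀ i : Fin 6, (vlab i).1 = 0 ∨ (vlab i).2 = 0 := by decide
lemma d_vlab_share : ∀ i m : Fin 6, i ≠ m → ((i:ℕ) < 3 ↔ (m:ℕ) < 3) →
    (vlab i).1 = (vlab m).1 ∨ (vlab i).2 = (vlab m).2 := by decide
lemma d_cval_inj : ∀ i m : Fin 6, (i:ℕ) < 3 → (m:ℕ) < 3 → cval i = cval m → i = m := by decide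
lemma d_rval_inj : ∀ i m : Fin 6, ¬(i:ℕ) < 3 → ¬(m:ℕ) < 3 → rval i = rval m → i = m := by decide
lemma d_vlab_cval : ∀ i : Fin 6, (i:ℕ) < 3 → (vlab i).2 = cval i := by decide
lemma d_vlab_rval : ∀ i : Fin 6, ¬(i:ℕ) < 3 → (vlab i).1 = rval i := by decide
lemma d_vlab1_zero : ∀ i : Fin 6, (vlab i).1 = 0 → (i:ℕ) < 3 := by decide
lemma d_vlab2_zero : ∀ i : Fin 6, (vlab i).2 = 0 → ¬(i:ℕ) < 3 := by decide
lemma d_rval_ne0 : ∀ j : Fin 6, ¬(j:ℕ) < 3 → rval j ≠ 0 := by decide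
lemma d_cval_ne0 : ∀ i : Fin 6, (i:ℕ) < 3 → cval i ≠ 0 := by decide
lemma d_row_block : ∀ i m : Fin 6, (vlab i).1 = (vlab m).1 → ((i:ℕ) < 3 ↔ (m:ℕ) < 3) := by decide
lemma d_col_block : ∀ i m : Fin 6, (vlab i).2 = (vlab m).2 → ((i:ℕ) < 3 ↔ (m:ℕ) < 3) := by decide
lemma d_vlab_rval_eq : ∀ i j : Fin 6, ¬(j:ℕ) < 3 → (vlab i).1 = rval j → i = j := by decide
lemma d_vlab_cval_eq : ∀ i j : Fin 6, (j:ℕ) < 3 → (vlab i).2 = cval j → i = j := by decide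

lemma lab_inj (hcard : Fintype.card V = 16) (hreg : G.IsRegularOfDegree 6)
    (hl : ∀ u w : V, G.Adj u w → (G.neighborFinset u ∩ G.neighborFinset w).card = 2)
    (hvadj : ∀ i, G.Adj x (v i)) (hvinj : Function.Injective v)
    (hvv : ∀ i j, G.Adj (v i) (v j) ↔ (i ≠ j ∧ ((i:ℕ) < 3 ↔ (j:ℕ) < 3))) :
    Function.Injective (lab G x v) := by
  intro u w h
  rcases tri x v u with rfl | ⟨i, rfl⟩ | hu <;> rcases tri x v w with rfl | ⟨m, rfl⟩ | hw
  · rfl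
  · rw [lab_x, lab_v hvadj hvinj] at h
    exact absurd h.symm (d_vlab_ne00 m)
  · exfalso
    obtain ⟨j, hj, hwj⟩ := LB' hcard hreg hl hvadj hvinj hvv hw
    have := lab_row hl hvadj hvv hj hwj
    rw [← h, lab_x] at this
    exact d_rval_ne0 j hj this.symm
  · rw [lab_x, lab_v hvadj hvinj] at h
    exact absurd h (d_vlab_ne00 i)
  · rw [lab_v hvadj hvinj, lab_v hvadj hvinj] at h
    exact congrArg v (d_vlab_inj i m h)
  · exfalso
    rw [lab_v hvadj hvinj] at h
    obtain ⟨j, hj, hwj⟩ := LB' hcard hreg hl hvadj hvinj hvv hw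
    obtain ⟨i', hi', hwi⟩ := LA' hcard hreg hl hvadj hvinj hvv hw
    have hr := lab_row hl hvadj hvv hj hwj
    have hc := lab_col hl hvadj hvv hi' hwi
    rw [← h] at hr hc
    rcases d_vlab_zero i with h0 | h0
    · exact d_rval_ne0 j hj (by rw [← hr, h0])
    · exact d_cval_ne0 i' hi' (by rw [← hc, h0])
  · exfalso
    obtain ⟨j, hj, huj⟩ := LB' hcard hreg hl hvadj hvinj hvv hu
    have := lab_row hl hvadj hvv hj huj
    rw [h, lab_x] at this
    exact d_rval_ne0 j hj this.symm
  · exfalso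
    rw [lab_v hvadj hvinj] at h
    obtain ⟨j, hj, huj⟩ := LB' hcard hreg hl hvadj hvinj hvv hu
    obtain ⟨i', hi', hui⟩ := LA' hcard hreg hl hvadj hvinj hvv hu
    have hr := lab_row hl hvadj hvv hj huj
    have hc := lab_col hl hvadj hvv hi' hui
    rw [h] at hr hc
    rcases d_vlab_zero m with h0 | h0
    · exact d_rval_ne0 j hj (by rw [← hr, h0])
    · exact d_cval_ne0 i' hi' (by rw [← hc, h0])
  · obtain ⟨i, hi, hui⟩ := LA' hcard hreg hl hvadj hvinj hvv hu
    obtain ⟨j, hj, huj⟩ := LB' hcard hreg hl hvadj hvinj hvv hu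
    obtain ⟨i', hi', hwi⟩ := LA' hcard hreg hl hvadj hvinj hvv hw
    obtain ⟨j', hj', hwj⟩ := LB' hcard hreg hl hvadj hvinj hvv hw
    have hc : cval i = cval i' := by
      rw [← lab_col hl hvadj hvv hi hui, ← lab_col hl hvadj hvv hi' hwi, h]
    have hr : rval j = rval j' := by
      rw [← lab_row hl hvadj hvv hj huj, ← lab_row hl hvadj hvv hj' hwj, h]
    obtain rfl := d_cval_inj i i' hi hi' hc
    obtain rfl := d_rval_inj j j' hj hj' hr
    exact L9 hreg hl hvadj hvinj hvv (fun hq => hj (by rw [← hq]; exact hi)) hui huj hwi hwj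

lemma key_forward (hcard : Fintype.card V = 16) (hreg : G.IsRegularOfDegree 6)
    (hl : ∀ u w : V, G.Adj u w → (G.neighborFinset u ∩ G.neighborFinset w).card = 2)
    (hvadj : ∀ i, G.Adj x (v i)) (hvinj : Function.Injective v)
    (hvv : ∀ i j, G.Adj (v i) (v j) ↔ (i ≠ j ∧ ((i:ℕ) < 3 ↔ (j:ℕ) < 3)))
    {u w : V} (hadj : G.Adj u w) :
    (lab G x v u).1 = (lab G x v w).1 ∨ (lab G x v u).2 = (lab G x v w).2 := by
  rcases tri x v u with rfl | ⟨i, rfl⟩ | hu <;> rcases tri x v w with rfl | ⟨m, rfl⟩ | hw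
  · exact absurd hadj (G.loopless.irrefl x)
  · rw [lab_x, lab_v hvadj hvinj]
    rcases d_vlab_zero m with h0 | h0
    · exact Or.inl h0.symm
    · exact Or.inr h0.symm
  · -- x adjacent to an outside vertex: impossible
    exfalso
    have : w ∈ G.neighborFinset x := (mem_neighborFinset _ _ _).2 hadj
    rw [L1 hreg hvadj hvinj] at this
    simp only [mem_image, mem_univ, true_and] at this
    obtain ⟨m, hm⟩ := this
    apply hw
    simp only [S, mem_insert, mem_image, mem_univ, true_and]
    exact Or.inr ⟨m, hm⟩
  · rw [lab_x, lab_v hvadj hvinj]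
    rcases d_vlab_zero i with h0 | h0
    · exact Or.inl (h0.trans rfl)
    · exact Or.inr (h0.trans rfl)
  · rw [lab_v hvadj hvinj, lab_v hvadj hvinj]
    obtain ⟨him, hblock⟩ := (hvv i m).1 hadj
    exact d_vlab_share i m him hblock
  · -- v i adjacent to outside vertex w : w ∈ P i
    have hwP : w ∈ P G x v i := Finset.mem_sdiff.2 ⟨(mem_neighborFinset _ _ _).2 hadj, hw⟩
    rw [lab_v hvadj hvinj]
    by_cases hi : (i:ℕ) < 3
    · right
      rw [d_vlab_cval i hi, lab_col hl hvadj hvv hi hwP]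
    · left
      rw [d_vlab_rval i hi, lab_row hl hvadj hvv hi hwP]
  · exfalso
    have : u ∈ G.neighborFinset x := (mem_neighborFinset _ _ _).2 hadj.symm
    rw [L1 hreg hvadj hvinj] at this
    simp only [mem_image, mem_univ, true_and] at this
    obtain ⟨m, hm⟩ := this
    apply hu
    simp only [S, mem_insert, mem_image, mem_univ, true_and]
    exact Or.inr ⟨m, hm⟩
  · have huP : u ∈ P G x v m :=
      Finset.mem_sdiff.2 ⟨(mem_neighborFinset _ _ _).2 hadj.symm, hu⟩
    rw [lab_v hvadj hvinj]
    by_cases hm : (m:ℕ) < 3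
    · right
      rw [d_vlab_cval m hm, lab_col hl hvadj hvv hm huP]
    · left
      rw [d_vlab_rval m hm, lab_row hl hvadj hvv hm huP]
  · obtain ⟨i, hi, hui⟩ := LA' hcard hreg hl hvadj hvinj hvv hu
    obtain ⟨j, hj, huj⟩ := LB' hcard hreg hl hvadj hvinj hvv hu
    obtain ⟨i', hi', hwi⟩ := LA' hcard hreg hl hvadj hvinj hvv hw
    obtain ⟨j', hj', hwj⟩ := LB' hcard hreg hl hvadj hvinj hvv hw
    by_cases hii : i = i'
    · right
      rw [lab_col hl hvadj hvv hi hui, lab_col hl hvadj hvv hi' hwi, hii]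
    by_cases hjj : j = j'
    · left
      rw [lab_row hl hvadj hvv hj huj, lab_row hl hvadj hvv hj' hwj, hjj]
    exact absurd hadj
      (L11 hreg hl hvadj hvinj hvv hi hi' hj hj' hii hjj hui huj hwi hwj)

lemma key_back_row (hcard : Fintype.card V = 16) (hreg : G.IsRegularOfDegree 6)
    (hl : ∀ u w : V, G.Adj u w → (G.neighborFinset u ∩ G.neighborFinset w).card = 2)
    (hvadj : ∀ i, G.Adj x (v i)) (hvinj : Function.Injective v)
    (hvv : ∀ i j, G.Adj (v i) (v j) ↔ (i ≠ j ∧ ((i:ℕ) < 3 ↔ (j:ℕ) < 3)))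
    {u w : V} (hne : u ≠ w) (h : (lab G x v u).1 = (lab G x v w).1) :
    G.Adj u w := by
  rcases tri x v u with rfl | ⟨i, rfl⟩ | hu <;> rcases tri x v w with rfl | ⟨m, rfl⟩ | hw
  · exact absurd rfl hne
  · rw [lab_x, lab_v hvadj hvinj] at h
    have := d_vlab1_zero m h.symm
    exact hvadj m
  · exfalso
    obtain ⟨j, hj, hwj⟩ := LB' hcard hreg hl hvadj hvinj hvv hw
    rw [lab_x, lab_row hl hvadj hvv hj hwj] at h
    exact d_rval_ne0 j hj h.symm
  · rw [lab_x, lab_v hvadj hvinj] at h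
    have := d_vlab1_zero i h
    exact (hvadj i).symm
  · rw [lab_v hvadj hvinj, lab_v hvadj hvinj] at h
    have him : i ≠ m := fun hq => hne (congrArg v hq)
    exact (hvv i m).2 ⟨him, d_row_block i m h⟩
  · obtain ⟨j, hj, hwj⟩ := LB' hcard hreg hl hvadj hvinj hvv hw
    rw [lab_v hvadj hvinj, lab_row hl hvadj hvv hj hwj] at h
    obtain rfl := d_vlab_rval_eq i j hj h
    exact (mem_P.1 hwj).1
  · exfalso
    obtain ⟨j, hj, huj⟩ := LB' hcard hreg hl hvadj hvinj hvv hu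
    rw [lab_x, lab_row hl hvadj hvv hj huj] at h
    exact d_rval_ne0 j hj h
  · obtain ⟨j, hj, huj⟩ := LB' hcard hreg hl hvadj hvinj hvv hu
    rw [lab_v hvadj hvinj, lab_row hl hvadj hvv hj huj] at h
    obtain rfl := d_vlab_rval_eq m j hj h.symm
    exact (mem_P.1 huj).1.symm
  · obtain ⟨j, hj, huj⟩ := LB' hcard hreg hl hvadj hvinj hvv hu
    obtain ⟨j', hj', hwj⟩ := LB' hcard hreg hl hvadj hvinj hvv hw
    rw [lab_row hl hvadj hvv hj huj, lab_row hl hvadj hvv hj' hwj] at h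
    obtain rfl := d_rval_inj j j' hj hj' h
    exact L8' hreg hl hvadj hvinj hvv huj hwj hne

lemma key_back_col (hcard : Fintype.card V = 16) (hreg : G.IsRegularOfDegree 6)
    (hl : ∀ u w : V, G.Adj u w → (G.neighborFinset u ∩ G.neighborFinset w).card = 2)
    (hvadj : ∀ i, G.Adj x (v i)) (hvinj : Function.Injective v)
    (hvv : ∀ i j, G.Adj (v i) (v j) ↔ (i ≠ j ∧ ((i:ℕ) < 3 ↔ (j:ℕ) < 3)))
    {u w : V} (hne : u ≠ w) (h : (lab G x v u).2 = (lab G x v w).2) :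
    G.Adj u w := by
  rcases tri x v u with rfl | ⟨i, rfl⟩ | hu <;> rcases tri x v w with rfl | ⟨m, rfl⟩ | hw
  · exact absurd rfl hne
  · rw [lab_x, lab_v hvadj hvinj] at h
    have := d_vlab2_zero m h.symm
    exact hvadj m
  · exfalso
    obtain ⟨i, hi, hwi⟩ := LA' hcard hreg hl hvadj hvinj hvv hw
    rw [lab_x, lab_col hl hvadj hvv hi hwi] at h
    exact d_cval_ne0 i hi h.symm
  · rw [lab_x, lab_v hvadj hvinj] at h
    have := d_vlab2_zero i h
    exact (hvadj i).symm
  · rw [lab_v hvadj hvinj, lab_v hvadj hvinj] at h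
    have him : i ≠ m := fun hq => hne (congrArg v hq)
    exact (hvv i m).2 ⟨him, d_col_block i m h⟩
  · obtain ⟨i', hi', hwi⟩ := LA' hcard hreg hl hvadj hvinj hvv hw
    rw [lab_v hvadj hvinj, lab_col hl hvadj hvv hi' hwi] at h
    obtain rfl := d_vlab_cval_eq i i' hi' h
    exact (mem_P.1 hwi).1
  · exfalso
    obtain ⟨i, hi, hui⟩ := LA' hcard hreg hl hvadj hvinj hvv hu
    rw [lab_x, lab_col hl hvadj hvv hi hui] at h
    exact d_cval_ne0 i hi h
  · obtain ⟨i, hi, hui⟩ := LA' hcard hreg hl hvadj hvinj hvv hu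
    rw [lab_v hvadj hvinj, lab_col hl hvadj hvv hi hui] at h
    obtain rfl := d_vlab_cval_eq m i hi h.symm
    exact (mem_P.1 hui).1.symm
  · obtain ⟨i, hi, hui⟩ := LA' hcard hreg hl hvadj hvinj hvv hu
    obtain ⟨i', hi', hwi⟩ := LA' hcard hreg hl hvadj hvinj hvv hw
    rw [lab_col hl hvadj hvv hi hui, lab_col hl hvadj hvv hi' hwi] at h
    obtain rfl := d_cval_inj i i' hi hi' h
    exact L8' hreg hl hvadj hvinj hvv hui hwi hne

end
end RookAux


open Finset SimpleGraph in
/-- If an edge-regular graph with parameters (16,6,2) has a vertex whose local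
graph is the disjoint union of two triangles, then it is the 4×4 rook graph. -/
theorem rook_characterization (V : Type*) [Fintype V] [DecidableEq V]
    (G : SimpleGraph V) [DecidableRel G.Adj]
    (hcard : Fintype.card V = 16)
    (hreg : G.IsRegularOfDegree 6)
    (hlam : ∀ u v : V, G.Adj u v → Fintype.card (G.commonNeighbors u v) = 2)
    (x : V) (hx : Nonempty (G.induce (G.neighborSet x) ≃g twoTriangles)) :
    Nonempty (G ≃g rook4) := by
  classical
  obtain ⟨e⟩ := hx
  set v : Fin 6 → V := fun i => ((e.symm i : G.neighborSet x) : V) with hv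
  have hvadj : ∀ i, G.Adj x (v i) := fun i => (e.symm i).2
  have hvinj : Function.Injective v :=
    fun i j hij => e.symm.toEquiv.injective (Subtype.ext hij)
  have htwo : ∀ i j : Fin 6, twoTriangles.Adj i j ↔ (i ≠ j ∧ ((i:ℕ) < 3 ↔ (j:ℕ) < 3)) := by
    intro i j
    rw [twoTriangles, SimpleGraph.fromRel_adj]
    constructor
    · rintro ⟨hne, h | h⟩
      exacts [⟨hne, h⟩, ⟨hne, h.symm⟩]
    · rintro ⟨hne, h⟩
      exact ⟨hne, Or.inl h⟩
  have hvv : ∀ i j, G.Adj (v i) (v j) ↔ (i ≠ j ∧ ((i:ℕ) < 3 ↔ (j:ℕ) < 3)) := by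
    intro i j
    have h1 := e.symm.map_rel_iff (a := i) (b := j)
    simp only [SimpleGraph.comap_adj] at h1
    rw [← htwo i j, ← h1]
    rfl
  have hl : ∀ u w : V, G.Adj u w → (G.neighborFinset u ∩ G.neighborFinset w).card = 2 := by
    intro u w huw
    have hset : G.neighborFinset u ∩ G.neighborFinset w = (G.commonNeighbors u w).toFinset := by
      ext z
      simp [SimpleGraph.mem_commonNeighbors, SimpleGraph.mem_neighborFinset, Set.mem_toFinset,
        and_comm]
    rw [hset, Set.toFinset_card, hlam u w huw]
  have hinj := RookAux.lab_inj hcard hreg hl hvadj hvinj hvv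
  have hbij : Function.Bijective (RookAux.lab G x v) := by
    rw [Fintype.bijective_iff_injective_and_card]
    exact ⟨hinj, by simp [hcard]⟩
  refine ⟨⟨Equiv.ofBijective _ hbij, @fun a b => ?_⟩⟩
  show rook4.Adj (RookAux.lab G x v a) (RookAux.lab G x v b) ↔ G.Adj a b
  constructor
  · rintro ⟨hne, h | h⟩
    · exact RookAux.key_back_row hcard hreg hl hvadj hvinj hvv
        (fun hq => hne (congrArg _ hq)) h
    · exact RookAux.key_back_col hcard hreg hl hvadj hvinj hvv
        (fun hq => hne (congrArg _ hq)) h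
  · intro hadj
    exact ⟨fun hq => G.ne_of_adj hadj (hinj hq),
      RookAux.key_forward hcard hreg hl hvadj hvinj hvv hadj⟩
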